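/- Let G be a finite graph with minimum degree d_min and maximum degree d_max, u a vertex, S a set of length-t trajectories starting at u, 0 < η ≤ 1, and ε ≤ 1/d_max^{2η}. Then for any strategy of the ε-time-biased random walk, q_{u,S}(ε) ≤ exp(4t/d_min^η) · (p_{u,S})^{η/(1+η)}, where p_{u,S} is the probability of S under the simple random walk and q_{u,S}(ε) under the biased walk. -/

import Mathlib

open Finset

/-- Probability that the simple random walk follows a given trajectory. -/
noncomputable def srwP {V : Type*} [Fintype V] [DecidableEq V]
    (G : SimpleGraph V) [DecidableRel G.Adj] : List V → ℝ
  | [] => 1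
  | [_] => 1
  | x :: y :: rest =>
      (if G.Adj x y then 1 / (G.degree x : ℝ) else 0) * srwP G (y :: rest)

/-- Probability that the `ε`-time-biased random walk with (history-dependent)
strategy `σ` follows a given trajectory, where `hist` is the history so far. -/
noncomputable def tbrwP {V : Type*} [Fintype V] [DecidableEq V]
    (G : SimpleGraph V) [DecidableRel G.Adj] (ε : ℝ) (σ : List V → V → ℝ) :
    List V → List V → ℝ
  | _, [] => 1
  | _, [_] => 1
  | hist, x :: y :: rest =>
      (if G.Adj x y then (1 - ε) / (G.degree x : ℝ) + ε * σ (hist ++ [x]) y else 0) *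
        tbrwP G ε σ (hist ++ [x]) (y :: rest)

private lemma le_rpow_mul_rpow {a s η : ℝ} (ha : 0 ≤ a) (has : a ≤ s) (hη1 : η ≤ 1) :
    a ≤ a ^ η * s ^ (1 - η) := by
  have h1 : a = a ^ η * a ^ (1 - η) := by
    rw [← Real.rpow_add' ha (by norm_num)]
    norm_num
  calc a = a ^ η * a ^ (1 - η) := h1
    _ ≤ a ^ η * s ^ (1 - η) := by
        apply mul_le_mul_of_nonneg_left
          (Real.rpow_le_rpow ha has (by linarith)) (Real.rpow_nonneg ha η)

private lemma rpow_subadd {x y η : ℝ} (hx : 0 ≤ x) (hy : 0 ≤ y) (hη0 : 0 < η) (hη1 : η ≤ 1) :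
    (x + y) ^ η ≤ x ^ η + y ^ η := by
  rcases eq_or_lt_of_le (by linarith : (0:ℝ) ≤ x + y) with hs | hs
  · have hx0 : x = 0 := by linarith
    have hy0 : y = 0 := by linarith
    simp [hx0, hy0, Real.zero_rpow hη0.ne']
  · have h1 : x ≤ x ^ η * (x + y) ^ (1 - η) := le_rpow_mul_rpow hx (by linarith) hη1
    have h2 : y ≤ y ^ η * (x + y) ^ (1 - η) := le_rpow_mul_rpow hy (by linarith) hη1
    have h3 : x + y ≤ (x ^ η + y ^ η) * (x + y) ^ (1 - η) := by
      rw [add_mul]; linarith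
    have h4 : (x + y) ^ η = (x + y) * ((x + y) ^ (1 - η))⁻¹ := by
      calc (x + y) ^ η = (x + y) ^ ((1:ℝ) + -(1 - η)) := by norm_num
        _ = (x + y) ^ (1:ℝ) * (x + y) ^ (-(1 - η)) := Real.rpow_add hs _ _
        _ = (x + y) * ((x + y) ^ (1 - η))⁻¹ := by rw [Real.rpow_one, Real.rpow_neg hs.le]
    rw [h4]
    rw [mul_inv_le_iff₀ (Real.rpow_pos_of_pos hs _)]
    exact h3

private lemma key_pow {a b η : ℝ} (ha : 0 ≤ a) (hb : 0 ≤ b) (hη0 : 0 < η) (hη1 : η ≤ 1) :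
    (a + b) ^ (1 + η) ≤ a ^ (1 + η) + 2 * (a + b) ^ η * b := by
  have hs : 0 ≤ a + b := by linarith
  have e1 : (a + b) ^ (1 + η) = (a + b) ^ η * a + (a + b) ^ η * b := by
    rw [Real.rpow_add' hs (by positivity), Real.rpow_one]
    ring
  have e2 : (a + b) ^ η * a ≤ a ^ (1 + η) + a ^ η * b := by
    calc (a + b) ^ η * a ≤ (a + b) ^ η * (a ^ η * (a + b) ^ (1 - η)) := by
          exact mul_le_mul_of_nonneg_left (le_rpow_mul_rpow ha (by linarith) hη1)
            (Real.rpow_nonneg hs η)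
      _ = a ^ η * ((a + b) ^ η * (a + b) ^ (1 - η)) := by ring
      _ = a ^ η * (a + b) := by
          rw [← Real.rpow_add' hs (by norm_num)]
          norm_num
      _ = a ^ η * a + a ^ η * b := by ring
      _ = a ^ (1 + η) + a ^ η * b := by
          rw [Real.rpow_add' ha (by positivity), Real.rpow_one]; ring
  have e3 : a ^ η * b ≤ (a + b) ^ η * b :=
    mul_le_mul_of_nonneg_right (Real.rpow_le_rpow ha (by linarith) hη0.le) hb
  linarith

private lemma chain_concat_aux {V : Type*} {G : SimpleGraph V} {h : List V} {x y : V}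
    (hc : (h ++ [x]).Chain' G.Adj) (hadj : G.Adj x y) :
    ((h ++ [x]) ++ [y]).Chain' G.Adj := by
  rw [List.Chain', List.isChain_append]
  refine ⟨hc, List.isChain_singleton _, ?_⟩
  intro p hp q hq
  rw [List.getLast?_concat] at hp
  simp only [List.head?_cons, Option.mem_some_iff] at hp hq
  subst hp; subst hq
  exact hadj

private lemma srwP_nonneg {V : Type*} [Fintype V] [DecidableEq V]
    (G : SimpleGraph V) [DecidableRel G.Adj] : ∀ l : List V, 0 ≤ srwP G l
  | [] => by simp [srwP]
  | [_] => by simp [srwP]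
  | x :: y :: r => by
    have h2 := srwP_nonneg G (y :: r)
    rw [srwP]
    apply mul_nonneg _ h2
    split_ifs
    · positivity
    · exact le_refl _

private lemma srwP_pos {V : Type*} [Fintype V] [DecidableEq V]
    (G : SimpleGraph V) [DecidableRel G.Adj] (hdeg : ∀ z : V, 0 < G.degree z) :
    ∀ l : List V, l.Chain' G.Adj → 0 < srwP G l
  | [], _ => by simp [srwP]
  | [_], _ => by simp [srwP]
  | x :: y :: r, hc => by
    rw [List.Chain', List.isChain_cons_cons] at hc
    have h2 := srwP_pos G hdeg (y :: r) hc.2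
    have hd : (0:ℝ) < (G.degree x : ℝ) := by exact_mod_cast hdeg x
    rw [srwP, if_pos hc.1]
    positivity

private lemma tbrwP_nonneg {V : Type*} [Fintype V] [DecidableEq V]
    (G : SimpleGraph V) [DecidableRel G.Adj] (u : V) (ε : ℝ) (σ : List V → V → ℝ)
    (hε0 : 0 ≤ ε) (hε1 : ε ≤ 1)
    (hσ0 : ∀ h, h.head? = some u → h.Chain' G.Adj → ∀ y, 0 ≤ σ h y) :
    ∀ (l h : List V) (x : V), l.head? = some x → l.Chain' G.Adj →
      (h ++ [x]).head? = some u → (h ++ [x]).Chain' G.Adj → 0 ≤ tbrwP G ε σ h l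
  | [], _, _, _, _, _, _ => by simp [tbrwP]
  | [_], _, _, _, _, _, _ => by simp [tbrwP]
  | a :: b :: r, h, x, hhd, hch, hu, hc => by
    have hax : a = x := by simpa using hhd
    subst hax
    rw [List.Chain', List.isChain_cons_cons] at hch
    have hc2 : ((h ++ [a]) ++ [b]).Chain' G.Adj := chain_concat_aux hc hch.1
    have hu2 : ((h ++ [a]) ++ [b]).head? = some u := by
      rw [List.head?_append_of_ne_nil _ (by simp)]; exact hu
    have hrec := tbrwP_nonneg G u ε σ hε0 hε1 hσ0 (b :: r) (h ++ [a]) b rfl hch.2 hu2 hc2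
    rw [tbrwP]
    apply mul_nonneg _ hrec
    split_ifs with hadj
    · have hσ := hσ0 (h ++ [a]) hu hc b
      have hd : (0:ℝ) ≤ (G.degree a : ℝ) := by positivity
      have : (0:ℝ) ≤ (1 - ε) / (G.degree a : ℝ) := div_nonneg (by linarith) hd
      have := mul_nonneg hε0 hσ
      linarith
    · exact le_refl _

set_option maxHeartbeats 1000000 in
private lemma step_bound {V : Type*} [Fintype V] [DecidableEq V]
    (G : SimpleGraph V) [DecidableRel G.Adj] (dmin dmax : ℕ) (hdmin1 : 1 ≤ dmin)
    (hdmin : ∀ z, dmin ≤ G.degree z) (hdmax : ∀ z, G.degree z ≤ dmax)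
    (η ε : ℝ) (hη0 : 0 < η) (hη1 : η ≤ 1) (hε0 : 0 ≤ ε)
    (hε : ε ≤ 1 / (dmax : ℝ) ^ (2 * η))
    (x : V) (s : V → ℝ) (hs0 : ∀ y, 0 ≤ s y) (hs1 : ∑ y, s y = 1) :
    ∑ y ∈ G.neighborFinset x,
        ((1 - ε) / (G.degree x : ℝ) + ε * s y) ^ (1 + η) * (G.degree x : ℝ) ^ η
      ≤ 1 + 4 / (dmin : ℝ) ^ η := by
  set D : ℝ := (dmin : ℝ) with hD
  set M : ℝ := (dmax : ℝ) with hM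
  set d : ℝ := (G.degree x : ℝ) with hd
  have hD1 : (1:ℝ) ≤ D := by rw [hD]; exact_mod_cast hdmin1
  have hDd : D ≤ d := by rw [hD, hd]; exact_mod_cast hdmin x
  have hdM : d ≤ M := by rw [hM, hd]; exact_mod_cast hdmax x
  have hd0 : (0:ℝ) < d := by linarith
  have hM1 : (1:ℝ) ≤ M := by linarith
  have hM0 : (0:ℝ) < M := by linarith
  have hMη : (1:ℝ) ≤ M ^ (2 * η) := Real.one_le_rpow hM1 (by positivity)
  have hε1 : ε ≤ 1 := le_trans hε (by rw [div_le_one (by linarith)]; exact hMη)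
  have hDη : (0:ℝ) < D ^ η := Real.rpow_pos_of_pos (by linarith) η
  have hdη : (0:ℝ) < d ^ η := Real.rpow_pos_of_pos hd0 η
  have hsle1 : ∀ y, s y ≤ 1 := by
    intro y
    rw [← hs1]
    exact Finset.single_le_sum (fun i _ => hs0 i) (mem_univ y)
  set a : ℝ := (1 - ε) / d with ha
  have ha0 : 0 ≤ a := div_nonneg (by linarith) hd0.le
  have had : a ≤ 1 / d := by
    rw [ha, div_le_div_iff₀ hd0 hd0]
    nlinarith
  -- pointwise bound
  have hpt : ∀ y ∈ G.neighborFinset x,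
      (a + ε * s y) ^ (1 + η) * d ^ η ≤
        a ^ (1 + η) * d ^ η + (2 * ((1/d) ^ η + ε ^ η) * ε * d ^ η) * s y := by
    intro y _
    have hb0 : 0 ≤ ε * s y := mul_nonneg hε0 (hs0 y)
    have h1 : (a + ε * s y) ^ (1 + η) ≤ a ^ (1 + η) + 2 * (a + ε * s y) ^ η * (ε * s y) :=
      key_pow ha0 hb0 hη0 hη1
    have h2 : (a + ε * s y) ^ η ≤ (1/d) ^ η + ε ^ η := by
      calc (a + ε * s y) ^ η ≤ (1/d + ε) ^ η := by
            apply Real.rpow_le_rpow (by linarith) _ hη0.le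
            have h3 : ε * s y ≤ ε := by nlinarith [hs0 y, hsle1 y]
            linarith
        _ ≤ (1/d) ^ η + ε ^ η := rpow_subadd (by positivity) hε0 hη0 hη1
    have h3 : 2 * (a + ε * s y) ^ η * (ε * s y) ≤ 2 * ((1/d) ^ η + ε ^ η) * (ε * s y) := by
      apply mul_le_mul_of_nonneg_right _ hb0
      linarith
    calc (a + ε * s y) ^ (1 + η) * d ^ η
        ≤ (a ^ (1 + η) + 2 * ((1/d) ^ η + ε ^ η) * (ε * s y)) * d ^ η := by
          apply mul_le_mul_of_nonneg_right _ hdη.le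
          linarith
      _ = a ^ (1 + η) * d ^ η + (2 * ((1/d) ^ η + ε ^ η) * ε * d ^ η) * s y := by ring
  have hsum := Finset.sum_le_sum hpt
  rw [Finset.sum_add_distrib, Finset.sum_const, ← Finset.mul_sum] at hsum
  -- term 1
  have hcard : ((G.neighborFinset x).card : ℝ) = d := by
    rw [hd]; norm_cast
  have hkey : d * ((1/d) ^ (1 + η) * d ^ η) = 1 := by
    rw [one_div, Real.inv_rpow hd0.le, Real.rpow_add hd0, Real.rpow_one]
    field_simp
  have hT1 : (G.neighborFinset x).card • (a ^ (1 + η) * d ^ η) ≤ 1 := by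
    rw [nsmul_eq_mul, hcard]
    have h3 : a ^ (1 + η) ≤ (1/d) ^ (1 + η) := Real.rpow_le_rpow ha0 had (by positivity)
    have h4 : a ^ (1 + η) * d ^ η ≤ (1/d) ^ (1 + η) * d ^ η :=
      mul_le_mul_of_nonneg_right h3 hdη.le
    calc d * (a ^ (1 + η) * d ^ η) ≤ d * ((1/d) ^ (1 + η) * d ^ η) :=
          mul_le_mul_of_nonneg_left h4 hd0.le
      _ = 1 := hkey
  -- sum of s over neighbors
  have hsN : ∑ y ∈ G.neighborFinset x, s y ≤ 1 := by
    rw [← hs1]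
    exact Finset.sum_le_sum_of_subset_of_nonneg (Finset.subset_univ _) (fun i _ _ => hs0 i)
  have hsN0 : 0 ≤ ∑ y ∈ G.neighborFinset x, s y := Finset.sum_nonneg (fun i _ => hs0 i)
  -- term 2
  have hinv : (1/d) ^ η * d ^ η = 1 := by
    rw [← Real.mul_rpow (by positivity) hd0.le, one_div_mul_cancel hd0.ne', Real.one_rpow]
  have hεD : ε ≤ 1 / D ^ η := by
    have h5 : D ^ η ≤ M ^ η := Real.rpow_le_rpow (by linarith) (hDd.trans hdM) hη0.le
    have h6 : M ^ η ≤ M ^ (2 * η) := Real.rpow_le_rpow_of_exponent_le hM1 (by nlinarith)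
    calc ε ≤ 1 / M ^ (2 * η) := hε
      _ ≤ 1 / D ^ η := one_div_le_one_div_of_le hDη (by linarith)
  have hε2D : ε ^ η * ε * d ^ η ≤ 1 / D ^ η := by
    have he1 : ε ^ η * ε = ε ^ (η + 1) := by
      rw [Real.rpow_add' hε0 (by positivity), Real.rpow_one]
    have he2 : ε ^ (η + 1) ≤ (1 / M ^ (2 * η)) ^ (η + 1) :=
      Real.rpow_le_rpow hε0 hε (by positivity)
    have he3 : d ^ η ≤ M ^ η := Real.rpow_le_rpow hd0.le hdM hη0.le
    have he4 : (1 / M ^ (2 * η)) ^ (η + 1) * M ^ η ≤ 1 / D ^ η := by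
      have e1 : (1 / M ^ (2 * η)) = M ^ (-(2 * η)) := by
        rw [Real.rpow_neg hM0.le, one_div]
      have e5 : D ^ η ≤ M ^ η := Real.rpow_le_rpow (by linarith) (hDd.trans hdM) hη0.le
      calc (1 / M ^ (2 * η)) ^ (η + 1) * M ^ η
          = (M ^ (-(2 * η))) ^ (η + 1) * M ^ η := by rw [e1]
        _ = M ^ (-(2 * η) * (η + 1)) * M ^ η := by rw [← Real.rpow_mul hM0.le]
        _ = M ^ (-(2 * η) * (η + 1) + η) := (Real.rpow_add hM0 _ _).symm
        _ ≤ M ^ (-η) := Real.rpow_le_rpow_of_exponent_le hM1 (by nlinarith)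
        _ = 1 / M ^ η := by rw [Real.rpow_neg hM0.le, one_div]
        _ ≤ 1 / D ^ η := one_div_le_one_div_of_le hDη e5
    calc ε ^ η * ε * d ^ η ≤ (1 / M ^ (2 * η)) ^ (η + 1) * M ^ η := by
          rw [he1]
          apply mul_le_mul he2 he3 (by positivity) (by positivity)
      _ ≤ 1 / D ^ η := he4
  have hT2 : 2 * ((1/d) ^ η + ε ^ η) * ε * d ^ η * ∑ y ∈ G.neighborFinset x, s y
      ≤ 4 / D ^ η := by
    have hf0 : 0 ≤ 2 * ((1/d) ^ η + ε ^ η) * ε * d ^ η := by positivity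
    calc 2 * ((1/d) ^ η + ε ^ η) * ε * d ^ η * ∑ y ∈ G.neighborFinset x, s y
        ≤ 2 * ((1/d) ^ η + ε ^ η) * ε * d ^ η * 1 := by
          exact mul_le_mul_of_nonneg_left hsN hf0
      _ = 2 * (ε * ((1/d) ^ η * d ^ η)) + 2 * (ε ^ η * ε * d ^ η) := by ring
      _ = 2 * ε + 2 * (ε ^ η * ε * d ^ η) := by rw [hinv, mul_one]
      _ ≤ 2 * (1 / D ^ η) + 2 * (1 / D ^ η) := by linarith
      _ = 4 / D ^ η := by ring
  linarith

private lemma list_shape {V : Type*} {x : V} {n : ℕ} :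
    ∀ {l : List V}, l.length = n + 2 → l.head? = some x → ∃ y r, l = x :: y :: r
  | [], hlen, _ => by simp at hlen
  | [a], hlen, _ => by simp at hlen
  | a :: b :: r, _, hhd => by
    have hax : a = x := by simpa using hhd
    exact ⟨b, r, by rw [hax]⟩

set_option maxHeartbeats 1600000 in
private lemma rec_bound {V : Type*} [Fintype V] [DecidableEq V]
    (G : SimpleGraph V) [DecidableRel G.Adj] (dmin dmax : ℕ) (hdmin1 : 1 ≤ dmin)
    (hdmin : ∀ z, dmin ≤ G.degree z) (hdmax : ∀ z, G.degree z ≤ dmax)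
    (u : V) (η ε : ℝ) (hη0 : 0 < η) (hη1 : η ≤ 1) (hε0 : 0 ≤ ε)
    (hε : ε ≤ 1 / (dmax : ℝ) ^ (2 * η)) (σ : List V → V → ℝ)
    (hσ0 : ∀ h, h.head? = some u → h.Chain' G.Adj → ∀ y, 0 ≤ σ h y)
    (hσsum : ∀ h : List V, h ≠ [] → h.head? = some u → h.Chain' G.Adj → ∑ y, σ h y = 1)
    (n : ℕ) :
    ∀ (x : V) (h : List V) (S : Finset (List V)),
      (h ++ [x]).head? = some u → (h ++ [x]).Chain' G.Adj →
      (∀ l ∈ S, l.length = n + 1 ∧ l.head? = some x ∧ l.Chain' G.Adj) →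
      ∑ l ∈ S, tbrwP G ε σ h l ^ (1 + η) / srwP G l ^ η
        ≤ (1 + 4 / (dmin : ℝ) ^ η) ^ n := by
  have hdeg : ∀ z : V, 0 < G.degree z := fun z => lt_of_lt_of_le hdmin1 (hdmin z)
  have hD0 : (0:ℝ) < (dmin : ℝ) := by exact_mod_cast hdmin1
  have hDη : (0:ℝ) < (dmin : ℝ) ^ η := Real.rpow_pos_of_pos hD0 η
  have hC0 : (0:ℝ) ≤ 1 + 4 / (dmin : ℝ) ^ η := by positivity
  induction n with
  | zero =>
    intro x h S hh hc hS
    have hsub : S ⊆ {[x]} := by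
      intro l hl
      obtain ⟨h1, h2, _⟩ := hS l hl
      rw [Finset.mem_singleton]
      match l, h1, h2 with
      | [a], _, h2 =>
        have : a = x := by simpa using h2
        rw [this]
    rcases Finset.subset_singleton_iff.mp hsub with rfl | rfl
    · simp
    · rw [Finset.sum_singleton, pow_zero]
      have h1 : tbrwP G ε σ h [x] = 1 := rfl
      have h2 : srwP G [x] = 1 := rfl
      rw [h1, h2, Real.one_rpow, Real.one_rpow]
      norm_num
  | succ n ih =>
    intro x h S hh hc hS
    have hM1 : (1:ℝ) ≤ (dmax : ℝ) := by
      exact_mod_cast le_trans hdmin1 ((hdmin x).trans (hdmax x))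
    have hε1 : ε ≤ 1 := by
      refine le_trans hε ?_
      rw [div_le_one (Real.rpow_pos_of_pos (by linarith) _)]
      exact Real.one_le_rpow hM1 (by positivity)
    have hd0 : (0:ℝ) < (G.degree x : ℝ) := by exact_mod_cast hdeg x
    have hdη : (0:ℝ) < ((G.degree x : ℝ)) ^ η := Real.rpow_pos_of_pos hd0 η
    have hvalid0 : ∀ y, 0 ≤ σ (h ++ [x]) y := hσ0 _ hh hc
    have hq0 : ∀ y : V, 0 ≤ (1 - ε) / (G.degree x : ℝ) + ε * σ (h ++ [x]) y := by
      intro y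
      have h1 : 0 ≤ ε * σ (h ++ [x]) y := mul_nonneg hε0 (hvalid0 y)
      have h2 : 0 ≤ (1 - ε) / (G.degree x : ℝ) := div_nonneg (by linarith) hd0.le
      linarith
    -- per fiber bound
    have hfiber : ∀ y : V,
        ∑ l ∈ S.filter (fun l => l.tail.headD u = y),
            tbrwP G ε σ h l ^ (1 + η) / srwP G l ^ η
          ≤ ((if G.Adj x y then (1 - ε) / (G.degree x : ℝ) + ε * σ (h ++ [x]) y else 0)
                ^ (1 + η) * (G.degree x : ℝ) ^ η) * (1 + 4 / (dmin : ℝ) ^ η) ^ n := by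
      intro y
      by_cases hne : (S.filter (fun l => l.tail.headD u = y)).Nonempty
      · obtain ⟨l₀, hl₀⟩ := hne
        have hl₀S : l₀ ∈ S := (Finset.mem_filter.mp hl₀).1
        have hl₀y : l₀.tail.headD u = y := (Finset.mem_filter.mp hl₀).2
        obtain ⟨hlen0, hhd0, hch0⟩ := hS l₀ hl₀S
        obtain ⟨y₀, r₀, rfl⟩ := list_shape (n := n) (by omega) hhd0
        have hy₀ : y₀ = y := by simpa using hl₀y
        have hadj : G.Adj x y := by
          rw [← hy₀]; exact (List.isChain_cons_cons.mp hch0).1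
        have hu2 : ((h ++ [x]) ++ [y]).head? = some u := by
          rw [List.head?_append_of_ne_nil _ (by simp)]; exact hh
        have hc2 : ((h ++ [x]) ++ [y]).Chain' G.Adj := chain_concat_aux hc hadj
        -- decomposition
        have hdec : ∀ l ∈ S.filter (fun l => l.tail.headD u = y),
            tbrwP G ε σ h l ^ (1 + η) / srwP G l ^ η
              = (((1 - ε) / (G.degree x : ℝ) + ε * σ (h ++ [x]) y) ^ (1 + η)
                  * (G.degree x : ℝ) ^ η)
                * (tbrwP G ε σ (h ++ [x]) l.tail ^ (1 + η) / srwP G l.tail ^ η) := by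
          intro l hl
          have hlS : l ∈ S := (Finset.mem_filter.mp hl).1
          have hly : l.tail.headD u = y := (Finset.mem_filter.mp hl).2
          obtain ⟨hlen, hhd, hch⟩ := hS l hlS
          obtain ⟨b, r, rfl⟩ := list_shape (n := n) (by omega) hhd
          have hby : b = y := by simpa using hly
          rw [hby] at hch ⊢
          have hch2 := List.isChain_cons_cons.mp hch
          have hT0 : 0 ≤ tbrwP G ε σ (h ++ [x]) (y :: r) :=
            tbrwP_nonneg G u ε σ hε0 hε1 hσ0 (y :: r) (h ++ [x]) y rfl hch2.2 hu2 hc2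
          have hW0 : 0 < srwP G (y :: r) := srwP_pos G hdeg _ hch2.2
          have e1 : tbrwP G ε σ h (x :: y :: r)
              = ((1 - ε) / (G.degree x : ℝ) + ε * σ (h ++ [x]) y)
                * tbrwP G ε σ (h ++ [x]) (y :: r) := by
            rw [tbrwP, if_pos hadj]
          have e2 : srwP G (x :: y :: r) = (1 / (G.degree x : ℝ)) * srwP G (y :: r) := by
            rw [srwP, if_pos hadj]
          rw [List.tail_cons, e1, e2,
            Real.mul_rpow (hq0 y) hT0, Real.mul_rpow (by positivity) hW0.le,
            one_div, Real.inv_rpow hd0.le]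
          have hWη : (0:ℝ) < srwP G (y :: r) ^ η := Real.rpow_pos_of_pos hW0 η
          field_simp
        -- injectivity of tail on the fiber
        have hinj : ∀ l1 ∈ S.filter (fun l => l.tail.headD u = y),
            ∀ l2 ∈ S.filter (fun l => l.tail.headD u = y), l1.tail = l2.tail → l1 = l2 := by
          intro l1 h1 l2 h2 he
          obtain ⟨hlen1, hhd1, _⟩ := hS l1 (Finset.mem_filter.mp h1).1
          obtain ⟨hlen2, hhd2, _⟩ := hS l2 (Finset.mem_filter.mp h2).1
          obtain ⟨b1, r1, rfl⟩ := list_shape (n := n) (by omega) hhd1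
          obtain ⟨b2, r2, rfl⟩ := list_shape (n := n) (by omega) hhd2
          simpa using he
        -- membership condition for image
        have hmem : ∀ m ∈ (S.filter (fun l => l.tail.headD u = y)).image List.tail,
            m.length = n + 1 ∧ m.head? = some y ∧ m.Chain' G.Adj := by
          intro m hm
          obtain ⟨l, hl, rfl⟩ := Finset.mem_image.mp hm
          have hlS : l ∈ S := (Finset.mem_filter.mp hl).1
          have hly : l.tail.headD u = y := (Finset.mem_filter.mp hl).2
          obtain ⟨hlen, hhd, hch⟩ := hS l hlS
          obtain ⟨b, r, rfl⟩ := list_shape (n := n) (by omega) hhd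
          have hby : b = y := by simpa using hly
          rw [hby] at hch ⊢
          have hch2 := List.isChain_cons_cons.mp hch
          refine ⟨?_, rfl, hch2.2⟩
          simpa using hlen
        have hIH := ih y (h ++ [x]) ((S.filter (fun l => l.tail.headD u = y)).image List.tail)
          hu2 hc2 hmem
        calc ∑ l ∈ S.filter (fun l => l.tail.headD u = y),
              tbrwP G ε σ h l ^ (1 + η) / srwP G l ^ η
            = ∑ l ∈ S.filter (fun l => l.tail.headD u = y),
                (((1 - ε) / (G.degree x : ℝ) + ε * σ (h ++ [x]) y) ^ (1 + η)
                  * (G.degree x : ℝ) ^ η)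
                * (tbrwP G ε σ (h ++ [x]) l.tail ^ (1 + η) / srwP G l.tail ^ η) :=
              Finset.sum_congr rfl hdec
          _ = (((1 - ε) / (G.degree x : ℝ) + ε * σ (h ++ [x]) y) ^ (1 + η)
                  * (G.degree x : ℝ) ^ η)
                * ∑ l ∈ S.filter (fun l => l.tail.headD u = y),
                    (tbrwP G ε σ (h ++ [x]) l.tail ^ (1 + η) / srwP G l.tail ^ η) := by
              rw [Finset.mul_sum]
          _ = (((1 - ε) / (G.degree x : ℝ) + ε * σ (h ++ [x]) y) ^ (1 + η)
                  * (G.degree x : ℝ) ^ η)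
                * ∑ m ∈ (S.filter (fun l => l.tail.headD u = y)).image List.tail,
                    (tbrwP G ε σ (h ++ [x]) m ^ (1 + η) / srwP G m ^ η) := by
              rw [Finset.sum_image hinj]
          _ ≤ (((1 - ε) / (G.degree x : ℝ) + ε * σ (h ++ [x]) y) ^ (1 + η)
                  * (G.degree x : ℝ) ^ η) * (1 + 4 / (dmin : ℝ) ^ η) ^ n := by
              apply mul_le_mul_of_nonneg_left hIH
              exact mul_nonneg (Real.rpow_nonneg (hq0 y) _) hdη.le
          _ = ((if G.Adj x y then (1 - ε) / (G.degree x : ℝ) + ε * σ (h ++ [x]) y else 0)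
                ^ (1 + η) * (G.degree x : ℝ) ^ η) * (1 + 4 / (dmin : ℝ) ^ η) ^ n := by
              rw [if_pos hadj]
      · rw [Finset.not_nonempty_iff_eq_empty] at hne
        rw [hne, Finset.sum_empty]
        apply mul_nonneg (mul_nonneg ?_ hdη.le) (pow_nonneg hC0 n)
        apply Real.rpow_nonneg
        split_ifs with hA
        · exact hq0 y
        · exact le_refl 0
    -- assemble
    have hsplit : ∑ l ∈ S, tbrwP G ε σ h l ^ (1 + η) / srwP G l ^ η
        = ∑ y ∈ univ, ∑ l ∈ S.filter (fun l => l.tail.headD u = y),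
            tbrwP G ε σ h l ^ (1 + η) / srwP G l ^ η :=
      (Finset.sum_fiberwise_of_maps_to (fun l _ => Finset.mem_univ _) _).symm
    rw [hsplit]
    have hstep : ∑ y ∈ univ,
        (if G.Adj x y then (1 - ε) / (G.degree x : ℝ) + ε * σ (h ++ [x]) y else 0)
          ^ (1 + η) * (G.degree x : ℝ) ^ η ≤ 1 + 4 / (dmin : ℝ) ^ η := by
      have heq : ∑ y ∈ univ,
          (if G.Adj x y then (1 - ε) / (G.degree x : ℝ) + ε * σ (h ++ [x]) y else 0)
            ^ (1 + η) * (G.degree x : ℝ) ^ η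
          = ∑ y ∈ G.neighborFinset x,
              ((1 - ε) / (G.degree x : ℝ) + ε * σ (h ++ [x]) y) ^ (1 + η)
                * (G.degree x : ℝ) ^ η := by
        rw [SimpleGraph.neighborFinset_eq_filter, Finset.sum_filter]
        apply Finset.sum_congr rfl
        intro y _
        split_ifs with hA
        · rfl
        · rw [Real.zero_rpow (by positivity), zero_mul]
      rw [heq]
      exact step_bound G dmin dmax hdmin1 hdmin hdmax η ε hη0 hη1 hε0 hε x
        (σ (h ++ [x])) hvalid0 (hσsum (h ++ [x]) (by simp) hh hc)
    calc ∑ y ∈ univ, ∑ l ∈ S.filter (fun l => l.tail.headD u = y),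
            tbrwP G ε σ h l ^ (1 + η) / srwP G l ^ η
        ≤ ∑ y ∈ univ,
            ((if G.Adj x y then (1 - ε) / (G.degree x : ℝ) + ε * σ (h ++ [x]) y else 0)
              ^ (1 + η) * (G.degree x : ℝ) ^ η) * (1 + 4 / (dmin : ℝ) ^ η) ^ n :=
          Finset.sum_le_sum (fun y _ => hfiber y)
      _ = (∑ y ∈ univ,
            (if G.Adj x y then (1 - ε) / (G.degree x : ℝ) + ε * σ (h ++ [x]) y else 0)
              ^ (1 + η) * (G.degree x : ℝ) ^ η) * (1 + 4 / (dmin : ℝ) ^ η) ^ n := by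
          rw [← Finset.sum_mul]
      _ ≤ (1 + 4 / (dmin : ℝ) ^ η) * (1 + 4 / (dmin : ℝ) ^ η) ^ n :=
          mul_le_mul_of_nonneg_right hstep (pow_nonneg hC0 n)
      _ = (1 + 4 / (dmin : ℝ) ^ η) ^ (n + 1) := (pow_succ' _ _).symm

theorem stmt_15 {V : Type*} [Fintype V] [DecidableEq V] (G : SimpleGraph V)
    [DecidableRel G.Adj] (dmin dmax : ℕ) (hdmin1 : 1 ≤ dmin)
    (hdmin : ∀ x, dmin ≤ G.degree x) (hdmax : ∀ x, G.degree x ≤ dmax)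
    (u : V) (t : ℕ) (ht : 0 < t) (S : Finset (List V))
    (hS : ∀ l ∈ S, l.length = t + 1 ∧ l.head? = some u ∧ l.Chain' G.Adj)
    (η : ℝ) (hη0 : 0 < η) (hη1 : η ≤ 1)
    (ε : ℝ) (hε0 : 0 ≤ ε) (hε : ε ≤ 1 / (dmax : ℝ) ^ (2 * η)) (σ : List V → V → ℝ)
    (hσ0 : ∀ h, h.head? = some u → h.Chain' G.Adj → ∀ y, 0 ≤ σ h y)
    (hσsupp : ∀ (h : List V) (x y : V), h.head? = some u → h.Chain' G.Adj →
      h.getLast? = some x → ¬ G.Adj x y → σ h y = 0)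
    (hσsum : ∀ h : List V, h ≠ [] → h.head? = some u → h.Chain' G.Adj →
      ∑ y, σ h y = 1) :
    ∑ l ∈ S, tbrwP G ε σ [] l ≤
      Real.exp (4 * t / (dmin : ℝ) ^ η) *
        (∑ l ∈ S, srwP G l) ^ (η / (1 + η)) := by
  classical
  have hdeg : ∀ z : V, 0 < G.degree z := fun z => lt_of_lt_of_le hdmin1 (hdmin z)
  have hD0 : (0:ℝ) < (dmin : ℝ) := by exact_mod_cast hdmin1
  have hDη : (0:ℝ) < (dmin : ℝ) ^ η := Real.rpow_pos_of_pos hD0 η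
  have hM1 : (1:ℝ) ≤ (dmax : ℝ) := by
    exact_mod_cast le_trans hdmin1 ((hdmin u).trans (hdmax u))
  have hε1 : ε ≤ 1 := by
    refine le_trans hε ?_
    rw [div_le_one (Real.rpow_pos_of_pos (by linarith) _)]
    exact Real.one_le_rpow hM1 (by positivity)
  have h1η : (0:ℝ) < 1 + η := by linarith
  rcases S.eq_empty_or_nonempty with rfl | hSne
  · simp only [Finset.sum_empty]
    rw [Real.zero_rpow (div_pos hη0 h1η).ne', mul_zero]
  · set P := ∑ l ∈ S, srwP G l with hP
    have hP0 : 0 < P := Finset.sum_pos (fun l hl => srwP_pos G hdeg l (hS l hl).2.2) hSne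
    have hq0 : ∀ l ∈ S, 0 ≤ tbrwP G ε σ [] l := fun l hl =>
      tbrwP_nonneg G u ε σ hε0 hε1 hσ0 l [] u (hS l hl).2.1 (hS l hl).2.2
        (by simp) (by simp [List.Chain'])
    have hjensen := Real.arith_mean_le_rpow_mean S (fun l => srwP G l / P)
      (fun l => tbrwP G ε σ [] l / srwP G l)
      (fun l _ => div_nonneg (srwP_nonneg G l) hP0.le)
      (by rw [← Finset.sum_div, ← hP, div_self hP0.ne'])
      (fun l hl => div_nonneg (hq0 l hl) (srwP_nonneg G l))
      (p := 1 + η) (by linarith)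
    have hL : ∑ l ∈ S, (srwP G l / P) * (tbrwP G ε σ [] l / srwP G l)
        = (∑ l ∈ S, tbrwP G ε σ [] l) / P := by
      rw [Finset.sum_div]
      apply Finset.sum_congr rfl
      intro l hl
      have hw := (srwP_pos G hdeg l (hS l hl).2.2).ne'
      field_simp
    have hR : ∑ l ∈ S, (srwP G l / P) * (tbrwP G ε σ [] l / srwP G l) ^ (1 + η)
        = (∑ l ∈ S, tbrwP G ε σ [] l ^ (1 + η) / srwP G l ^ η) / P := by
      rw [Finset.sum_div]
      apply Finset.sum_congr rfl
      intro l hl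
      have hw := srwP_pos G hdeg l (hS l hl).2.2
      have hwη : (0:ℝ) < srwP G l ^ η := Real.rpow_pos_of_pos hw η
      rw [Real.div_rpow (hq0 l hl) hw.le]
      have h1 : srwP G l ^ ((1:ℝ) + η) = srwP G l * srwP G l ^ η := by
        rw [Real.rpow_add hw, Real.rpow_one]
      rw [h1]
      field_simp
    rw [hL, hR] at hjensen
    set Q := ∑ l ∈ S, tbrwP G ε σ [] l with hQdef
    set R := ∑ l ∈ S, tbrwP G ε σ [] l ^ (1 + η) / srwP G l ^ η with hRdef
    have hrec : R ≤ (1 + 4 / (dmin : ℝ) ^ η) ^ t :=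
      rec_bound G dmin dmax hdmin1 hdmin hdmax u η ε hη0 hη1 hε0 hε σ hσ0 hσsum t
        u [] S (by simp) (by simp [List.Chain']) hS
    have hQ0 : 0 ≤ Q := Finset.sum_nonneg hq0
    have hR0 : 0 ≤ R := Finset.sum_nonneg fun l hl =>
      div_nonneg (Real.rpow_nonneg (hq0 l hl) _) (Real.rpow_nonneg (srwP_nonneg G l) _)
    have hRC : R ≤ Real.exp (4 * t / (dmin : ℝ) ^ η) := by
      have hCexp : 1 + 4 / (dmin : ℝ) ^ η ≤ Real.exp (4 / (dmin : ℝ) ^ η) := by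
        have := Real.add_one_le_exp (4 / (dmin : ℝ) ^ η)
        linarith
      calc R ≤ (1 + 4 / (dmin : ℝ) ^ η) ^ t := hrec
        _ ≤ Real.exp (4 / (dmin : ℝ) ^ η) ^ t := by
            apply pow_le_pow_left₀ (by positivity) hCexp
        _ = Real.exp (t * (4 / (dmin : ℝ) ^ η)) := (Real.exp_nat_mul _ t).symm
        _ = Real.exp (4 * t / (dmin : ℝ) ^ η) := by
            congr 1; ring
    have hmain : Q ≤ (R / P) ^ (1 / (1 + η)) * P := by
      have h2 := mul_le_mul_of_nonneg_right hjensen hP0.le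
      rwa [div_mul_cancel₀ _ hP0.ne'] at h2
    have hsplit : (R / P) ^ (1 / (1 + η)) * P = R ^ (1 / (1 + η)) * P ^ (η / (1 + η)) := by
      rw [Real.div_rpow hR0 hP0.le]
      have h3 : P ^ ((1:ℝ)) / P ^ (1 / (1 + η)) = P ^ (η / (1 + η)) := by
        rw [← Real.rpow_sub hP0]
        congr 1
        field_simp
        ring
      calc R ^ (1 / (1 + η)) / P ^ (1 / (1 + η)) * P
          = R ^ (1 / (1 + η)) * (P ^ ((1:ℝ)) / P ^ (1 / (1 + η))) := by
            rw [Real.rpow_one]; ring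
        _ = R ^ (1 / (1 + η)) * P ^ (η / (1 + η)) := by rw [h3]
    have hRpow : R ^ (1 / (1 + η)) ≤ Real.exp (4 * t / (dmin : ℝ) ^ η) := by
      have e0 : (0:ℝ) ≤ 4 * t / (dmin : ℝ) ^ η := by positivity
      calc R ^ (1 / (1 + η))
          ≤ (Real.exp (4 * t / (dmin : ℝ) ^ η)) ^ (1 / (1 + η)) :=
            Real.rpow_le_rpow hR0 hRC (by positivity)
        _ = Real.exp (4 * t / (dmin : ℝ) ^ η * (1 / (1 + η))) := by
            rw [← Real.exp_mul]
        _ ≤ Real.exp (4 * t / (dmin : ℝ) ^ η) := by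
            apply Real.exp_le_exp.mpr
            rw [mul_one_div]
            exact div_le_self e0 (by linarith)
    calc Q ≤ (R / P) ^ (1 / (1 + η)) * P := hmain
      _ = R ^ (1 / (1 + η)) * P ^ (η / (1 + η)) := hsplit
      _ ≤ Real.exp (4 * t / (dmin : ℝ) ^ η) * P ^ (η / (1 + η)) :=
          mul_le_mul_of_nonneg_right hRpow (Real.rpow_nonneg hP0.le _)
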